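/- Let Ω ⊆ ℝ^N be a bounded measurable set, p ∈ [2,∞), s ∈ (0,1). Let u, v : ℝ^N → ℝ be measurable, set w = (u−v)⁺, and assume w = 0 almost everywhere on ℝ^N ∖ Ω. Define the (pointwise nonnegative) function K(x,y) = (J_p(u(x)−u(y)) − J_p(v(x)−v(y))) · (w(x)−w(y)) / |x−y|^{N+ps}, where J_p(t) = |t|^{p−2}t. If ∬_{ℝ^N×ℝ^N} K(x,y) dx dy ≤ 0, then u ≤ v almost everywhere on ℝ^N. (Strict T-monotonicity of the fractional p-Laplacian.) -/

import Mathlib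

open MeasureTheory Set

lemma jlt_nonneg {c a b : ℝ} (hc : 0 ≤ c) (hb : 0 ≤ b) (hba : b < a) :
    |b| ^ c * b < |a| ^ c * a := by
  have ha : 0 < a := hb.trans_lt hba
  rw [abs_of_nonneg hb, abs_of_pos ha]
  have h1 : b ^ c ≤ a ^ c := Real.rpow_le_rpow hb hba.le hc
  have h2 : (0:ℝ) < a ^ c := Real.rpow_pos_of_pos ha c
  nlinarith [Real.rpow_nonneg hb c]

lemma jlt {c a b : ℝ} (hc : 0 ≤ c) (hba : b < a) : |b| ^ c * b < |a| ^ c * a := by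
  rcases le_or_gt 0 b with hb | hb
  · exact jlt_nonneg hc hb hba
  rcases le_or_gt 0 a with ha | ha
  · have h1 : |b| ^ c * b < 0 :=
      mul_neg_of_pos_of_neg (Real.rpow_pos_of_pos (abs_pos.2 hb.ne) c) hb
    have h2 : 0 ≤ |a| ^ c * a := mul_nonneg (Real.rpow_nonneg (abs_nonneg a) c) ha
    linarith
  · have h := jlt_nonneg hc (neg_nonneg.2 ha.le) (neg_lt_neg hba)
    rw [abs_neg, abs_neg] at h
    nlinarith

noncomputable def Kfun (N : ℕ) (p s : ℝ) (u v : EuclideanSpace ℝ (Fin N) → ℝ)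
    (x y : EuclideanSpace ℝ (Fin N)) : ENNReal :=
  ENNReal.ofReal
    (((|u x - u y| ^ (p - 2) * (u x - u y) - |v x - v y| ^ (p - 2) * (v x - v y)) *
        (max (u x - v x) 0 - max (u y - v y) 0)) /
      ‖x - y‖ ^ ((N : ℝ) + p * s))

lemma Kfun_measurable (N : ℕ) (p s : ℝ) (u v : EuclideanSpace ℝ (Fin N) → ℝ)
    (hu : Measurable u) (hv : Measurable v) :
    Measurable (Function.uncurry (Kfun N p s u v)) := by
  unfold Function.uncurry Kfun
  fun_prop

/-- Strict T-monotonicity of the fractional `p`-Laplacian: if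
`w = (u - v)⁺` vanishes a.e. outside the bounded measurable set `Ω` and the (pointwise
nonnegative) energy
`∬ (J_p(u(x)-u(y)) - J_p(v(x)-v(y))) (w(x)-w(y)) / ‖x-y‖^(N+ps) dx dy` is `≤ 0`,
then `u ≤ v` almost everywhere. -/
theorem statement6 {N : ℕ} (hN : 1 ≤ N) {p s : ℝ} (hp : 2 ≤ p)
    (hs : s ∈ Set.Ioo (0 : ℝ) 1) (hNps : p * s < (N : ℝ))
    (Ω : Set (EuclideanSpace ℝ (Fin N)))
    (hΩm : MeasurableSet Ω) (hΩb : Bornology.IsBounded Ω)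
    (u v : EuclideanSpace ℝ (Fin N) → ℝ) (hu : Measurable u) (hv : Measurable v)
    (hw0 : ∀ᵐ x, x ∉ Ω → max (u x - v x) 0 = 0)
    (hK : (∫⁻ x, ∫⁻ y, ENNReal.ofReal
        (((|u x - u y| ^ (p - 2) * (u x - u y) - |v x - v y| ^ (p - 2) * (v x - v y)) *
            (max (u x - v x) 0 - max (u y - v y) 0)) /
          ‖x - y‖ ^ ((N : ℝ) + p * s))) ≤ 0) :
    ∀ᵐ x, u x ≤ v x := by
  haveI : Nonempty (Fin N) := ⟨⟨0, hN⟩⟩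
  set F : EuclideanSpace ℝ (Fin N) → EuclideanSpace ℝ (Fin N) → ENNReal :=
    Kfun N p s u v with hF
  have hK : (∫⁻ x, ∫⁻ y, F x y) ≤ 0 := hK
  have hFm : Measurable (Function.uncurry F) := Kfun_measurable N p s u v hu hv
  have hgm : Measurable fun x => ∫⁻ y, F x y := hFm.lintegral_prod_right
  have h0 : (∫⁻ x, ∫⁻ y, F x y) = 0 := le_antisymm hK zero_le
  have hae : ∀ᵐ x, (∫⁻ y, F x y) = 0 := (lintegral_eq_zero_iff hgm).mp h0
  -- the complement of Ω has nonzero measure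
  have hcompl : (volume : Measure (EuclideanSpace ℝ (Fin N))) Ωᶜ ≠ 0 := by
    intro h
    have huniv : (volume : Measure (EuclideanSpace ℝ (Fin N))) univ = ⊤ := measure_univ_of_isAddLeftInvariant _
    have : volume (univ : Set (EuclideanSpace ℝ (Fin N))) ≤ volume Ω + volume Ωᶜ := by
      rw [← union_compl_self Ω]; exact measure_union_le _ _
    rw [huniv, h, add_zero] at this
    exact (hΩb.measure_lt_top.ne) (top_le_iff.mp this)
  filter_upwards [hae, hw0] with x hx _
  by_contra hlt
  push_neg at hlt
  -- key: inner integral at x must vanish, yet F x y > 0 for a.e. y outside Ω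
  have hFxm : Measurable (F x) := hFm.of_uncurry_left
  have hinner : ∀ᵐ y, F x y = 0 := (lintegral_eq_zero_iff hFxm).mp hx
  -- build a good point y : outside Ω, with w y = 0, y ≠ x, F x y = 0
  have hbad : volume ({y : EuclideanSpace ℝ (Fin N) | ¬ (y ∉ Ω → max (u y - v y) 0 = 0)} ∪
      {y : EuclideanSpace ℝ (Fin N) | ¬ F x y = 0} ∪ {x}) = 0 := by
    refine measure_union_null (measure_union_null ?_ ?_) (measure_singleton x)
    · exact ae_iff.mp hw0
    · exact ae_iff.mp hinner
  have hpos : volume (Ωᶜ \ ({y : EuclideanSpace ℝ (Fin N) | ¬ (y ∉ Ω → max (u y - v y) 0 = 0)} ∪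
      {y : EuclideanSpace ℝ (Fin N) | ¬ F x y = 0} ∪ {x})) ≠ 0 := by
    rw [measure_diff_null hbad]; exact hcompl
  obtain ⟨y, hyΩ, hyg⟩ := nonempty_of_measure_ne_zero hpos
  simp only [mem_union, mem_setOf_eq, mem_singleton_iff, not_or, not_not] at hyg
  obtain ⟨⟨hy1, hy2⟩, hyx⟩ := hyg
  have hwy : max (u y - v y) 0 = 0 := hy1 hyΩ
  have hwyle : u y - v y ≤ 0 := by
    by_contra h
    push_neg at h
    rw [max_eq_left h.le] at hwy
    linarith
  have hwx : max (u x - v x) 0 = u x - v x := max_eq_left (by linarith)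
  -- F x y is positive : contradiction
  have hba : v x - v y < u x - u y := by linarith
  have hJ : |v x - v y| ^ (p - 2) * (v x - v y) < |u x - u y| ^ (p - 2) * (u x - u y) :=
    jlt (by linarith) hba
  have hxy : x ≠ y := fun h => hyx h.symm
  have hden : (0:ℝ) < ‖x - y‖ ^ ((N : ℝ) + p * s) :=
    Real.rpow_pos_of_pos (norm_pos_iff.2 (sub_ne_zero.2 hxy)) _
  have hnum : (0:ℝ) < (|u x - u y| ^ (p - 2) * (u x - u y) -
      |v x - v y| ^ (p - 2) * (v x - v y)) * (max (u x - v x) 0 - max (u y - v y) 0) := by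
    rw [hwx, hwy]
    have : (0:ℝ) < u x - v x - 0 := by linarith
    nlinarith
  have hFpos : F x y ≠ 0 := by
    rw [hF]
    unfold Kfun
    simp only [ne_eq, ENNReal.ofReal_eq_zero, not_le]
    positivity
  exact hFpos hy2
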